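/- The function u ↦ arcsin(1/u) is convex on the interval (1, ∞). (This is the convexity of the elevation angle θ = (180/π)·arcsin((z_U−H_B)/d_{U,B}) as a function of the ratio d_{U,B}/(z_U−H_B), used in the proof of the channel-gain lower bound.) -/

import Mathlib

open Real Set

lemma sqrt_aux {u : ℝ} (hu : 1 < u) : Real.sqrt (1 - (1/u)^2) = Real.sqrt (u^2 - 1) / u := by
  have hu0 : (0:ℝ) < u := by linarith
  have h : 1 - (1/u)^2 = (u^2-1)/u^2 := by field_simp
  rw [h, Real.sqrt_div (by nlinarith), Real.sqrt_sq hu0.le]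

lemma deriv1 {u : ℝ} (hu : 1 < u) :
    HasDerivAt (fun u : ℝ => Real.arcsin (1/u)) (-(u * Real.sqrt (u^2 - 1))⁻¹) u := by
  have hu0 : (0:ℝ) < u := by linarith
  have h1 : (1:ℝ)/u ≠ 1 := ne_of_lt ((div_lt_one hu0).mpr hu)
  have h2 : (1:ℝ)/u ≠ -1 := by
    have : (0:ℝ) < 1/u := by positivity
    linarith
  have hs : (0:ℝ) < Real.sqrt (u^2 - 1) := Real.sqrt_pos.mpr (by nlinarith)
  have hinv : HasDerivAt (fun u : ℝ => 1/u) (-(1/u^2)) u := by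
    simpa [one_div] using (hasDerivAt_inv hu0.ne')
  have := (Real.hasDerivAt_arcsin h2 h1).comp u hinv
  refine this.congr_deriv ?_
  rw [sqrt_aux hu]
  field_simp

lemma deriv2 {u : ℝ} (hu : 1 < u) :
    HasDerivAt (fun u : ℝ => -(u * Real.sqrt (u^2 - 1))⁻¹)
      (((2*u^2 - 1) / Real.sqrt (u^2 - 1)) / (u * Real.sqrt (u^2 - 1))^2) u := by
  have hu0 : (0:ℝ) < u := by linarith
  have hq : (0:ℝ) < u^2 - 1 := by nlinarith
  have hs : (0:ℝ) < Real.sqrt (u^2 - 1) := Real.sqrt_pos.mpr hq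
  have hsq : HasDerivAt (fun u : ℝ => Real.sqrt (u^2 - 1)) (u / Real.sqrt (u^2 - 1)) u := by
    have h1 : HasDerivAt (fun u : ℝ => u^2 - 1) (2*u) u := by
      simpa using ((hasDerivAt_pow 2 u).sub_const 1)
    have := (Real.hasDerivAt_sqrt hq.ne').comp u h1
    refine this.congr_deriv ?_
    field_simp
  have hg : HasDerivAt (fun u : ℝ => u * Real.sqrt (u^2 - 1))
      (Real.sqrt (u^2 - 1) + u * (u / Real.sqrt (u^2 - 1))) u := by
    exact ((hasDerivAt_id' u).mul hsq).congr_deriv (by ring)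
  have hgne : u * Real.sqrt (u^2 - 1) ≠ 0 := by positivity
  have := (hg.inv hgne).neg
  refine this.congr_deriv ?_
  have h2 : Real.sqrt (u^2 - 1) + u * (u / Real.sqrt (u^2 - 1)) = (2*u^2 - 1)/Real.sqrt (u^2 - 1) := by
    field_simp
    nlinarith [Real.sq_sqrt hq.le]
  rw [h2]
  field_simp

/-- The function u ↦ arcsin(1/u) is convex on (1, ∞). -/
theorem arcsin_inv_convexOn :
    ConvexOn ℝ (Set.Ioi (1 : ℝ)) (fun u => Real.arcsin (1 / u)) := by
  have hint : interior (Set.Ioi (1:ℝ)) = Set.Ioi 1 := interior_Ioi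
  refine convexOn_of_hasDerivWithinAt2_nonneg (convex_Ioi 1)
    (f' := fun u => -(u * Real.sqrt (u^2 - 1))⁻¹)
    (f'' := fun u => ((2*u^2 - 1) / Real.sqrt (u^2 - 1)) / (u * Real.sqrt (u^2 - 1))^2)
    ?_ ?_ ?_ ?_
  · exact Real.continuous_arcsin.comp_continuousOn
      (continuousOn_const.div continuousOn_id (fun x hx => by
        have : (1:ℝ) < x := hx; positivity))
  · rw [hint]; exact fun x hx => (deriv1 hx).hasDerivWithinAt
  · rw [hint]; exact fun x hx => (deriv2 hx).hasDerivWithinAt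
  · rw [hint]
    intro x hx
    have hx1 : (1:ℝ) < x := hx
    have hq : (0:ℝ) < x^2 - 1 := by nlinarith
    have hs : (0:ℝ) < Real.sqrt (x^2 - 1) := Real.sqrt_pos.mpr hq
    have h2 : (0:ℝ) < 2*x^2 - 1 := by nlinarith
    positivity
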